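/- Let n ≥ 1, let U ⊆ ℝⁿ be open, and let v : ℝⁿ → ℝ be three times continuously differentiable, strictly positive on U, and satisfy Δv = (n/2)·|Dv|²/v on U. Then for γ = 1 − n the following pointwise inequality holds on U: div( v^{1−n}·S²_{ij}(D²v)·∂_i v ) + ((1−n)/2)·div( v^{−n}·|Dv|²·Dv ) ≤ 0. -/

import Mathlib

/-- Partial derivative `∂_i f` of a function on `ℝⁿ`. -/
noncomputable def pd {n : ℕ} (i : Fin n) (f : (Fin n → ℝ) → ℝ) (x : Fin n → ℝ) : ℝ :=
  fderiv ℝ f x (Pi.single i 1)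

/-- Laplacian `Δf = ∑ᵢ ∂ᵢᵢ f`. -/
noncomputable def lap {n : ℕ} (f : (Fin n → ℝ) → ℝ) (x : Fin n → ℝ) : ℝ :=
  ∑ i, pd i (pd i f) x

/-- `S²_{ij}(D²v) = (Δv)·δ_{ij} − ∂_{ij}v`. -/
noncomputable def S2ij {n : ℕ} (v : (Fin n → ℝ) → ℝ) (i j : Fin n) (x : Fin n → ℝ) : ℝ :=
  lap v x * (if i = j then 1 else 0) - pd j (pd i v) x

/-- `|Df|² = ∑ᵢ (∂ᵢf)²`. -/
noncomputable def gradSq {n : ℕ} (f : (Fin n → ℝ) → ℝ) (x : Fin n → ℝ) : ℝ :=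
  ∑ i, (pd i f x) ^ 2

open Filter Topology

variable {n : ℕ} {f g : (Fin n → ℝ) → ℝ} {x : Fin n → ℝ}

lemma pd_congr (h : f =ᶠ[𝓝 x] g) (i : Fin n) : pd i f x = pd i g x := by
  unfold pd; rw [h.fderiv_eq]

lemma pd_sub (hf : DifferentiableAt ℝ f x) (hg : DifferentiableAt ℝ g x) (i : Fin n) :
    pd i (fun y => f y - g y) x = pd i f x - pd i g x := by
  unfold pd; rw [fderiv_fun_sub hf hg]; rfl

lemma pd_mul (hf : DifferentiableAt ℝ f x) (hg : DifferentiableAt ℝ g x) (i : Fin n) :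
    pd i (fun y => f y * g y) x = pd i f x * g x + f x * pd i g x := by
  unfold pd; rw [fderiv_fun_mul hf hg]
  simp [ContinuousLinearMap.add_apply, ContinuousLinearMap.smul_apply]; ring

lemma pd_const_mul (c : ℝ) (hf : DifferentiableAt ℝ f x) (i : Fin n) :
    pd i (fun y => c * f y) x = c * pd i f x := by
  unfold pd; rw [fderiv_const_mul hf]; rfl

lemma pd_sum {ι : Type*} (s : Finset ι) (F : ι → (Fin n → ℝ) → ℝ)
    (hF : ∀ k ∈ s, DifferentiableAt ℝ (F k) x) (i : Fin n) :
    pd i (fun y => ∑ k ∈ s, F k y) x = ∑ k ∈ s, pd i (F k) x := by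
  unfold pd; rw [fderiv_fun_sum hF]; simp

lemma pd_rpow (p : ℝ) (hf : DifferentiableAt ℝ f x) (h : f x ≠ 0) (i : Fin n) :
    pd i (fun y => f y ^ p) x = p * f x ^ (p - 1) * pd i f x := by
  unfold pd
  rw [(hf.hasFDerivAt.rpow_const (Or.inl h)).fderiv]
  simp [ContinuousLinearMap.smul_apply]

lemma pd_sq (hf : DifferentiableAt ℝ f x) (i : Fin n) :
    pd i (fun y => f y ^ 2) x = 2 * f x * pd i f x := by
  have e : (fun y => f y ^ 2) = fun y => f y * f y := by funext y; ring
  rw [e, pd_mul hf hf]; ring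

section
open Filter Topology

variable {n : ℕ} {f : (Fin n → ℝ) → ℝ} {U : Set (Fin n → ℝ)} {x : Fin n → ℝ}

lemma contDiffOn_pd {m : ℕ} (hU : IsOpen U) (hf : ContDiffOn ℝ (m + 1) f U) (i : Fin n) :
    ContDiffOn ℝ m (pd i f) U := by
  have h1 : ContDiffOn ℝ m (fderiv ℝ f) U :=
    hf.fderiv_of_isOpen hU (by exact_mod_cast le_rfl)
  exact (ContinuousLinearMap.apply ℝ ℝ
    (Pi.single i 1 : Fin n → ℝ)).contDiff.comp_contDiffOn h1

lemma diffAt_of_cd {m : ℕ} (hU : IsOpen U) (hf : ContDiffOn ℝ (m + 1) f U) (hx : x ∈ U) :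
    DifferentiableAt ℝ f x :=
  ((hf.differentiableOn (by simp)).differentiableAt
    (hU.mem_nhds hx))

lemma pd_comm (hf : ContDiffAt ℝ 2 f x) (i j : Fin n) :
    pd i (pd j f) x = pd j (pd i f) x := by
  have hsymm : ∀ a b, fderiv ℝ (fderiv ℝ f) x a b = fderiv ℝ (fderiv ℝ f) x b a := by
    have := hf.isSymmSndFDerivAt (by simp [minSmoothness_of_isRCLikeNormedField])
    exact this
  have hdf : DifferentiableAt ℝ (fderiv ℝ f) x := by
    obtain ⟨u, hu, hfu⟩ : ∃ u ∈ 𝓝 x, ContDiffOn ℝ 2 f u :=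
      hf.contDiffOn (m := 2) le_rfl (by simp)
    rcases mem_nhds_iff.1 hu with ⟨t, tu, t_open, xt⟩
    have : ContDiffOn ℝ 1 (fderiv ℝ f) t :=
      (hfu.mono tu).fderiv_of_isOpen t_open (by norm_num)
    exact (this.differentiableOn one_ne_zero).differentiableAt (t_open.mem_nhds xt)
  have key : ∀ a b : Fin n → ℝ,
      fderiv ℝ (fun y => fderiv ℝ f y b) x a = fderiv ℝ (fderiv ℝ f) x a b := by
    intro a b
    have : HasFDerivAt (fun y => fderiv ℝ f y b)
        ((ContinuousLinearMap.apply ℝ ℝ b).comp (fderiv ℝ (fderiv ℝ f) x)) x :=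
      (ContinuousLinearMap.apply ℝ ℝ b).hasFDerivAt.comp x hdf.hasFDerivAt
    rw [this.fderiv]; rfl
  show fderiv ℝ (fun y => fderiv ℝ f y (Pi.single j 1)) x (Pi.single i 1)
      = fderiv ℝ (fun y => fderiv ℝ f y (Pi.single i 1)) x (Pi.single j 1)
  rw [key, key, hsymm]

end

set_option maxHeartbeats 2000000 in
/-- For `γ = 1 − n`: if `v > 0` solves `Δv = (n/2)·|Dv|²/v` on `U`, then
`div(v^{1−n}·S²_{ij}(D²v)·∂ᵢv) + ((1−n)/2)·div(v^{−n}·|Dv|²·Dv) ≤ 0` on `U`. -/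
theorem stmt_9 (n : ℕ) (hn : 1 ≤ n) (U : Set (Fin n → ℝ)) (hU : IsOpen U)
    (v : (Fin n → ℝ) → ℝ) (hv : ContDiffOn ℝ 3 v U) (hpos : ∀ x ∈ U, 0 < v x)
    (hpde : ∀ x ∈ U, lap v x = ((n : ℝ) / 2) * gradSq v x / v x)
    (x : Fin n → ℝ) (hx : x ∈ U) :
    (∑ j, pd j (fun y => v y ^ ((1 : ℝ) - n) * ∑ i, S2ij v i j y * pd i v y) x)
      + (((1 : ℝ) - n) / 2)
        * ∑ j, pd j (fun y => v y ^ (-(n : ℝ)) * gradSq v y * pd j v y) x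
    ≤ 0 := by
  have hn1 : (1:ℝ) ≤ (n:ℝ) := by exact_mod_cast hn
  have hVpos : 0 < v x := hpos x hx
  have hVne : v x ≠ 0 := ne_of_gt hVpos
  -- ## smoothness facts
  have hv' : ContDiffOn ℝ ((2:ℕ)+1) v U := by exact_mod_cast hv
  have dv : ∀ y ∈ U, DifferentiableAt ℝ v y := fun y hy => diffAt_of_cd (m := 2) hU hv' hy
  have cdpd : ∀ i : Fin n, ContDiffOn ℝ ((1:ℕ)+1) (pd i v) U := fun i => by
    exact_mod_cast contDiffOn_pd (m := 2) hU hv' i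
  have dpd : ∀ (i : Fin n) (y), y ∈ U → DifferentiableAt ℝ (pd i v) y :=
    fun i y hy => diffAt_of_cd (m := 1) hU (cdpd i) hy
  have cdpd2 : ∀ i j : Fin n, ContDiffOn ℝ ((0:ℕ)+1) (pd j (pd i v)) U := fun i j => by
    exact_mod_cast contDiffOn_pd (m := 1) hU (by exact_mod_cast cdpd i) j
  have dpd2 : ∀ (i j : Fin n) (y), y ∈ U → DifferentiableAt ℝ (pd j (pd i v)) y :=
    fun i j y hy => diffAt_of_cd (m := 0) hU (cdpd2 i j) hy
  have hgs : gradSq v = fun y => ∑ i, pd i v y ^ 2 := rfl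
  have dq : ∀ y ∈ U, DifferentiableAt ℝ (gradSq v) y := fun y hy => by
    rw [hgs]; exact DifferentiableAt.fun_sum (fun i _ => (dpd i y hy).pow 2)
  have cdq : ContDiffOn ℝ ((1:ℕ)+1) (gradSq v) U := by
    rw [hgs]; exact ContDiffOn.sum (fun i _ => (by exact_mod_cast (cdpd i).pow 2))
  have dpq : ∀ (j : Fin n) (y), y ∈ U → DifferentiableAt ℝ (pd j (gradSq v)) y := fun j y hy =>
    diffAt_of_cd (m := 0) hU (by exact_mod_cast contDiffOn_pd (m := 1) hU cdq j) hy
  -- ## pointwise identities on U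
  have hpdq : ∀ (j : Fin n) (y), y ∈ U →
      pd j (gradSq v) y = ∑ i, 2 * pd i v y * pd j (pd i v) y := by
    intro j y hy
    have h1 : pd j (fun z => ∑ i, pd i v z ^ 2) y = ∑ i, pd j (fun z => pd i v z ^ 2) y :=
      pd_sum Finset.univ (fun i => fun z => pd i v z ^ 2) (fun i _ => (dpd i y hy).pow 2) j
    rw [hgs, h1]
    exact Finset.sum_congr rfl fun i _ => pd_sq (dpd i y hy) j
  have hS2 : ∀ (j : Fin n) (y), y ∈ U →
      (∑ i, S2ij v i j y * pd i v y)
        = lap v y * pd j v y - (1/2) * pd j (gradSq v) y := by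
    intro j y hy
    rw [hpdq j y hy, Finset.mul_sum]
    unfold S2ij
    rw [show (∑ i, (lap v y * (if i = j then 1 else 0) - pd j (pd i v) y) * pd i v y)
        = ∑ i, ((if i = j then lap v y * pd i v y else 0)
            - (1/2) * (2 * pd i v y * pd j (pd i v) y)) from
      Finset.sum_congr rfl fun i _ => by by_cases h : i = j <;> simp [h] <;> ring]
    rw [Finset.sum_sub_distrib, Finset.sum_ite_eq' Finset.univ j fun i => lap v y * pd i v y]
    simp [Finset.mul_sum]
  have hFeq : ∀ j : Fin n,
      (fun y => v y ^ ((1:ℝ) - n) * ∑ i, S2ij v i j y * pd i v y) =ᶠ[nhds x]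
      (fun y => ((n:ℝ)/2) * (v y ^ (-(n:ℝ)) * gradSq v y * pd j v y)
        - (1/2) * (v y ^ ((1:ℝ) - n) * pd j (gradSq v) y)) := by
    intro j
    filter_upwards [hU.mem_nhds hx] with y hy
    rw [hS2 j y hy, hpde y hy]
    have hvy : (0:ℝ) < v y := hpos y hy
    have hvyne : v y ≠ 0 := ne_of_gt hvy
    have hsplit : v y ^ ((1:ℝ) - (n:ℝ)) = v y ^ (-(n:ℝ)) * v y := by
      rw [show ((1:ℝ) - (n:ℝ)) = (-(n:ℝ)) + 1 by ring, Real.rpow_add hvy, Real.rpow_one]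
    rw [hsplit]
    generalize v y ^ (-(n:ℝ)) = a
    field_simp
  have dG : ∀ (j : Fin n) (y), y ∈ U →
      DifferentiableAt ℝ (fun z => v z ^ (-(n:ℝ)) * gradSq v z * pd j v z) y := by
    intro j y hy
    exact (((dv y hy).rpow_const (Or.inl (ne_of_gt (hpos y hy)))).mul (dq y hy)).mul
      (dpd j y hy)
  have dK : ∀ (j : Fin n) (y), y ∈ U →
      DifferentiableAt ℝ (fun z => v z ^ ((1:ℝ) - n) * pd j (gradSq v) z) y := by
    intro j y hy
    exact ((dv y hy).rpow_const (Or.inl (ne_of_gt (hpos y hy)))).mul (dpq j y hy)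
  have hpdF : ∀ j : Fin n,
      pd j (fun y => v y ^ ((1:ℝ) - n) * ∑ i, S2ij v i j y * pd i v y) x
      = ((n:ℝ)/2) * pd j (fun y => v y ^ (-(n:ℝ)) * gradSq v y * pd j v y) x
        - (1/2) * pd j (fun y => v y ^ ((1:ℝ) - n) * pd j (gradSq v) y) x := by
    intro j
    have h1 : DifferentiableAt ℝ
        (fun y => ((n:ℝ)/2) * (v y ^ (-(n:ℝ)) * gradSq v y * pd j v y)) x :=
      (dG j x hx).const_mul _
    have h2 : DifferentiableAt ℝ
        (fun y => (1/2 : ℝ) * (v y ^ ((1:ℝ) - n) * pd j (gradSq v) y)) x :=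
      (dK j x hx).const_mul _
    have e1 : pd j (fun y => ((n:ℝ)/2) * (v y ^ (-(n:ℝ)) * gradSq v y * pd j v y)
        - (1/2 : ℝ) * (v y ^ ((1:ℝ) - n) * pd j (gradSq v) y)) x
        = pd j (fun y => ((n:ℝ)/2) * (v y ^ (-(n:ℝ)) * gradSq v y * pd j v y)) x
          - pd j (fun y => (1/2 : ℝ) * (v y ^ ((1:ℝ) - n) * pd j (gradSq v) y)) x :=
      pd_sub h1 h2 j
    have e2 : pd j (fun y => ((n:ℝ)/2) * (v y ^ (-(n:ℝ)) * gradSq v y * pd j v y)) x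
        = ((n:ℝ)/2) * pd j (fun y => v y ^ (-(n:ℝ)) * gradSq v y * pd j v y) x :=
      pd_const_mul _ (dG j x hx) j
    have e3 : pd j (fun y => (1/2 : ℝ) * (v y ^ ((1:ℝ) - n) * pd j (gradSq v) y)) x
        = (1/2 : ℝ) * pd j (fun y => v y ^ ((1:ℝ) - n) * pd j (gradSq v) y) x :=
      pd_const_mul _ (dK j x hx) j
    rw [pd_congr (hFeq j) j, e1, e2, e3]
  -- ## values at x
  have hD1 : ∀ j : Fin n,
      pd j (fun y => v y ^ (-(n:ℝ)) * gradSq v y * pd j v y) x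
      = (-(n:ℝ) * v x ^ (-(n:ℝ) - 1) * pd j v x * gradSq v x
          + v x ^ (-(n:ℝ)) * pd j (gradSq v) x) * pd j v x
        + v x ^ (-(n:ℝ)) * gradSq v x * pd j (pd j v) x := by
    intro j
    have hprod : DifferentiableAt ℝ (fun z => v z ^ (-(n:ℝ)) * gradSq v z) x :=
      ((dv x hx).rpow_const (Or.inl hVne)).mul (dq x hx)
    have e1 : pd j (fun y => v y ^ (-(n:ℝ)) * gradSq v y * pd j v y) x
        = pd j (fun y => v y ^ (-(n:ℝ)) * gradSq v y) x * pd j v x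
          + (v x ^ (-(n:ℝ)) * gradSq v x) * pd j (pd j v) x :=
      pd_mul hprod (dpd j x hx) j
    have e2 : pd j (fun y => v y ^ (-(n:ℝ)) * gradSq v y) x
        = pd j (fun y => v y ^ (-(n:ℝ))) x * gradSq v x
          + v x ^ (-(n:ℝ)) * pd j (gradSq v) x :=
      pd_mul ((dv x hx).rpow_const (Or.inl hVne)) (dq x hx) j
    have e3 : pd j (fun y => v y ^ (-(n:ℝ))) x
        = (-(n:ℝ)) * v x ^ (-(n:ℝ) - 1) * pd j v x :=
      pd_rpow _ (dv x hx) hVne j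
    rw [e1, e2, e3]
  have hD2 : ∀ j : Fin n,
      pd j (fun y => v y ^ ((1:ℝ) - n) * pd j (gradSq v) y) x
      = ((1:ℝ) - n) * v x ^ ((1:ℝ) - n - 1) * pd j v x * pd j (gradSq v) x
        + v x ^ ((1:ℝ) - n) * pd j (pd j (gradSq v)) x := by
    intro j
    have e1 : pd j (fun y => v y ^ ((1:ℝ) - n) * pd j (gradSq v) y) x
        = pd j (fun y => v y ^ ((1:ℝ) - n)) x * pd j (gradSq v) x
          + v x ^ ((1:ℝ) - n) * pd j (pd j (gradSq v)) x :=
      pd_mul ((dv x hx).rpow_const (Or.inl hVne)) (dpq j x hx) j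
    have e2 : pd j (fun y => v y ^ ((1:ℝ) - n)) x
        = ((1:ℝ) - n) * v x ^ ((1:ℝ) - n - 1) * pd j v x :=
      pd_rpow _ (dv x hx) hVne j
    rw [e1, e2]
  have hR : ∀ j : Fin n,
      pd j (pd j (gradSq v)) x
      = ∑ i, (2 * (pd j (pd i v) x) ^ 2
          + 2 * (pd i v x * pd j (pd j (pd i v)) x)) := by
    intro j
    have heq : pd j (gradSq v) =ᶠ[nhds x] fun y => ∑ i, 2 * pd i v y * pd j (pd i v) y := by
      filter_upwards [hU.mem_nhds hx] with y hy; exact hpdq j y hy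
    rw [pd_congr heq j]
    have e1 : pd j (fun y => ∑ i, 2 * pd i v y * pd j (pd i v) y) x
        = ∑ i, pd j (fun y => 2 * pd i v y * pd j (pd i v) y) x :=
      pd_sum Finset.univ _
        (fun i _ => ((dpd i x hx).const_mul 2).mul (dpd2 i j x hx)) j
    rw [e1]
    refine Finset.sum_congr rfl fun i _ => ?_
    have e2 : pd j (fun y => 2 * pd i v y * pd j (pd i v) y) x
        = pd j (fun y => 2 * pd i v y) x * pd j (pd i v) x
          + (2 * pd i v x) * pd j (pd j (pd i v)) x :=
      pd_mul ((dpd i x hx).const_mul 2) (dpd2 i j x hx) j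
    have e3 : pd j (fun y => 2 * pd i v y) x = 2 * pd j (pd i v) x :=
      pd_const_mul 2 (dpd i x hx) j
    rw [e2, e3]; ring
  -- third derivatives: commuting and using the PDE
  have hT : ∀ i : Fin n,
      (∑ j, pd j (pd j (pd i v)) x)
      = ((n:ℝ)/2) * (pd i (gradSq v) x * (v x)⁻¹
          + gradSq v x * (-1 * (v x ^ 2)⁻¹ * pd i v x)) := by
    intro i
    have hc : ∀ j : Fin n, pd j (pd j (pd i v)) x = pd i (pd j (pd j v)) x := by
      intro j
      have hev : pd j (pd i v) =ᶠ[nhds x] pd i (pd j v) := by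
        filter_upwards [hU.mem_nhds hx] with y hy
        have hcd2 : ContDiffAt ℝ 2 v y := by
          exact_mod_cast (hv.contDiffAt (hU.mem_nhds hy)).of_le (by norm_num)
        exact pd_comm hcd2 j i
      have h2 : ContDiffAt ℝ 2 (pd j v) x := by
        exact_mod_cast (cdpd j).contDiffAt (hU.mem_nhds hx)
      calc pd j (pd j (pd i v)) x = pd j (pd i (pd j v)) x := pd_congr hev j
        _ = pd i (pd j (pd j v)) x := pd_comm h2 j i
    have e0 : pd i (fun y => ∑ j, pd j (pd j v) y) x = ∑ j, pd i (pd j (pd j v)) x :=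
      pd_sum Finset.univ _ (fun j _ => dpd2 j j x hx) i
    have e1 : (∑ j, pd j (pd j (pd i v)) x) = pd i (lap v) x := by
      rw [Finset.sum_congr rfl fun j _ => hc j]
      rw [← e0]
      rfl
    have hlev : lap v =ᶠ[nhds x] fun y => ((n:ℝ)/2) * (gradSq v y * v y ^ (-(1:ℝ))) := by
      filter_upwards [hU.mem_nhds hx] with y hy
      rw [hpde y hy, Real.rpow_neg_one]
      ring
    have e2 : pd i (fun y => ((n:ℝ)/2) * (gradSq v y * v y ^ (-(1:ℝ)))) x
        = ((n:ℝ)/2) * pd i (fun y => gradSq v y * v y ^ (-(1:ℝ))) x :=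
      pd_const_mul _ ((dq x hx).mul ((dv x hx).rpow_const (Or.inl hVne))) i
    have e3 : pd i (fun y => gradSq v y * v y ^ (-(1:ℝ))) x
        = pd i (gradSq v) x * v x ^ (-(1:ℝ))
          + gradSq v x * pd i (fun y => v y ^ (-(1:ℝ))) x :=
      pd_mul (dq x hx) ((dv x hx).rpow_const (Or.inl hVne)) i
    have e4 : pd i (fun y => v y ^ (-(1:ℝ))) x
        = (-(1:ℝ)) * v x ^ (-(1:ℝ) - 1) * pd i v x :=
      pd_rpow _ (dv x hx) hVne i
    have hi1 : v x ^ (-(1:ℝ)) = (v x)⁻¹ := Real.rpow_neg_one (v x)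
    have hi2 : v x ^ (-(1:ℝ) - 1) = (v x ^ 2)⁻¹ := by
      rw [show (-(1:ℝ) - 1) = -((2:ℕ):ℝ) by norm_num, Real.rpow_neg hVpos.le,
        Real.rpow_natCast]
    rw [e1, pd_congr hlev i, e2, e3, e4, hi1, hi2]
  -- ## assembly
  have hQmul : (∑ j, pd j v x * pd j v x) = gradSq v x := by
    simp [gradSq, pow_two]
  have hlapx : (∑ j, pd j (pd j v) x) = ((n:ℝ)/2) * gradSq v x / v x := hpde x hx
  have hAn : v x ^ (-(n:ℝ)) = v x ^ (-(n:ℝ) - 1) * v x := by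
    have h := Real.rpow_add hVpos (-(n:ℝ) - 1) 1
    rw [Real.rpow_one] at h
    rw [show (-(n:ℝ) - 1 + 1) = -(n:ℝ) by ring] at h
    exact h
  have hA1n : v x ^ ((1:ℝ) - n) = v x ^ (-(n:ℝ) - 1) * v x ^ 2 := by
    have h := Real.rpow_add hVpos (-(n:ℝ) - 1) ((2:ℕ):ℝ)
    rw [Real.rpow_natCast] at h
    rw [show (-(n:ℝ) - 1 + ((2:ℕ):ℝ)) = (1:ℝ) - n by push_cast; ring] at h
    exact h
  have hE : v x ^ ((1:ℝ) - n - 1) = v x ^ (-(n:ℝ) - 1) * v x := by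
    have h := Real.rpow_add hVpos (-(n:ℝ) - 1) 1
    rw [Real.rpow_one] at h
    rw [show (-(n:ℝ) - 1 + 1) = (1:ℝ) - n - 1 by ring] at h
    exact h
  have hSD1cf : (∑ j, pd j (fun y => v y ^ (-(n:ℝ)) * gradSq v y * pd j v y) x)
      = -(n:ℝ) * v x ^ (-(n:ℝ) - 1) * gradSq v x * gradSq v x
        + (v x ^ (-(n:ℝ) - 1) * v x) * (∑ j, pd j (gradSq v) x * pd j v x)
        + (v x ^ (-(n:ℝ) - 1) * v x) * gradSq v x * (((n:ℝ)/2) * gradSq v x / v x) := by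
    calc (∑ j, pd j (fun y => v y ^ (-(n:ℝ)) * gradSq v y * pd j v y) x)
        = ∑ j, (-(n:ℝ) * v x ^ (-(n:ℝ) - 1) * gradSq v x * (pd j v x * pd j v x)
            + v x ^ (-(n:ℝ)) * (pd j (gradSq v) x * pd j v x)
            + v x ^ (-(n:ℝ)) * gradSq v x * pd j (pd j v) x) :=
          Finset.sum_congr rfl fun j _ => by rw [hD1 j]; ring
      _ = -(n:ℝ) * v x ^ (-(n:ℝ) - 1) * gradSq v x * (∑ j, pd j v x * pd j v x)
            + v x ^ (-(n:ℝ)) * (∑ j, pd j (gradSq v) x * pd j v x)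
            + v x ^ (-(n:ℝ)) * gradSq v x * (∑ j, pd j (pd j v) x) := by
          simp only [Finset.sum_add_distrib, ← Finset.mul_sum]
      _ = _ := by rw [hQmul, hlapx, hAn]
  have hgT : ∀ i : Fin n, pd i v x * (∑ j, pd j (pd j (pd i v)) x)
      = ((n:ℝ)/2) * (pd i (gradSq v) x * pd i v x * (v x)⁻¹
          - gradSq v x * (v x ^ 2)⁻¹ * (pd i v x * pd i v x)) := by
    intro i; rw [hT i]; ring
  have hRRcf : (∑ j, pd j (pd j (gradSq v)) x)
      = 2 * (∑ i, ∑ j, (pd j (pd i v) x) ^ 2)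
        + 2 * (((n:ℝ)/2) * ((∑ i, pd i (gradSq v) x * pd i v x) * (v x)⁻¹
            - gradSq v x * (v x ^ 2)⁻¹ * gradSq v x)) := by
    calc (∑ j, pd j (pd j (gradSq v)) x)
        = ∑ j, ∑ i, (2 * (pd j (pd i v) x) ^ 2
            + 2 * (pd i v x * pd j (pd j (pd i v)) x)) :=
          Finset.sum_congr rfl fun j _ => hR j
      _ = ∑ i, ∑ j, (2 * (pd j (pd i v) x) ^ 2
            + 2 * (pd i v x * pd j (pd j (pd i v)) x)) := Finset.sum_comm
      _ = ∑ i, (2 * (∑ j, (pd j (pd i v) x) ^ 2)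
            + 2 * (pd i v x * ∑ j, pd j (pd j (pd i v)) x)) := by
          refine Finset.sum_congr rfl fun i _ => ?_
          simp only [Finset.sum_add_distrib, ← Finset.mul_sum]
      _ = 2 * (∑ i, ∑ j, (pd j (pd i v) x) ^ 2)
            + 2 * (∑ i, pd i v x * ∑ j, pd j (pd j (pd i v)) x) := by
          simp only [Finset.sum_add_distrib, ← Finset.mul_sum]
      _ = _ := by
          rw [Finset.sum_congr rfl fun i _ => hgT i, ← Finset.mul_sum,
            Finset.sum_sub_distrib, ← Finset.sum_mul, ← Finset.mul_sum, hQmul]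
  have hSD2cf : (∑ j, pd j (fun y => v y ^ ((1:ℝ) - n) * pd j (gradSq v) y) x)
      = ((1:ℝ) - n) * (v x ^ (-(n:ℝ) - 1) * v x) * (∑ j, pd j (gradSq v) x * pd j v x)
        + (v x ^ (-(n:ℝ) - 1) * v x ^ 2)
          * (2 * (∑ i, ∑ j, (pd j (pd i v) x) ^ 2)
            + 2 * (((n:ℝ)/2) * ((∑ i, pd i (gradSq v) x * pd i v x) * (v x)⁻¹
              - gradSq v x * (v x ^ 2)⁻¹ * gradSq v x))) := by
    calc (∑ j, pd j (fun y => v y ^ ((1:ℝ) - n) * pd j (gradSq v) y) x)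
        = ∑ j, (((1:ℝ) - n) * v x ^ ((1:ℝ) - n - 1) * (pd j (gradSq v) x * pd j v x)
            + v x ^ ((1:ℝ) - n) * pd j (pd j (gradSq v)) x) :=
          Finset.sum_congr rfl fun j _ => by rw [hD2 j]; ring
      _ = ((1:ℝ) - n) * v x ^ ((1:ℝ) - n - 1) * (∑ j, pd j (gradSq v) x * pd j v x)
            + v x ^ ((1:ℝ) - n) * (∑ j, pd j (pd j (gradSq v)) x) := by
          simp only [Finset.sum_add_distrib, ← Finset.mul_sum]
      _ = _ := by rw [hRRcf, hE, hA1n]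
  have step1 : (∑ j, pd j (fun y => v y ^ ((1:ℝ) - n) * ∑ i, S2ij v i j y * pd i v y) x)
      = ((n:ℝ)/2) * (∑ j, pd j (fun y => v y ^ (-(n:ℝ)) * gradSq v y * pd j v y) x)
        - (1/2) * (∑ j, pd j (fun y => v y ^ ((1:ℝ) - n) * pd j (gradSq v) y) x) := by
    rw [Finset.sum_congr rfl fun j _ => hpdF j, Finset.sum_sub_distrib,
      ← Finset.mul_sum, ← Finset.mul_sum]
  -- Cauchy–Schwarz
  have hHH : (0:ℝ) ≤ ∑ i, ∑ j, (pd j (pd i v) x) ^ 2 :=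
    Finset.sum_nonneg fun i _ => Finset.sum_nonneg fun j _ => sq_nonneg _
  have hCS : (((n:ℝ)/2) * gradSq v x / v x) ^ 2
      ≤ (n:ℝ) * ∑ i, ∑ j, (pd j (pd i v) x) ^ 2 := by
    have h0 : (∑ i, pd i (pd i v) x) = ((n:ℝ)/2) * gradSq v x / v x := hpde x hx
    have h1 : (∑ i, pd i (pd i v) x) ^ 2 ≤ (n:ℝ) * ∑ i, (pd i (pd i v) x) ^ 2 := by
      have := sq_sum_le_card_mul_sum_sq
        (s := (Finset.univ : Finset (Fin n))) (f := fun i => pd i (pd i v) x)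
      simpa using this
    have h2 : (∑ i, (pd i (pd i v) x) ^ 2) ≤ ∑ i, ∑ j, (pd j (pd i v) x) ^ 2 :=
      Finset.sum_le_sum fun i _ => Finset.single_le_sum
        (f := fun j => (pd j (pd i v) x) ^ 2) (fun j _ => sq_nonneg _) (Finset.mem_univ i)
    rw [← h0]
    have h3 : (n:ℝ) * (∑ i, (pd i (pd i v) x) ^ 2)
        ≤ (n:ℝ) * ∑ i, ∑ j, (pd j (pd i v) x) ^ 2 :=
      mul_le_mul_of_nonneg_left h2 (by positivity)
    linarith
  have hBpos : (0:ℝ) < v x ^ (-(n:ℝ) - 1) := Real.rpow_pos_of_pos hVpos _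
  have hq2 : ((n:ℝ)/4) * (gradSq v x) ^ 2 ≤ v x ^ 2 * (∑ i, ∑ j, (pd j (pd i v) x) ^ 2) := by
    have h3 : (((n:ℝ)/2) * gradSq v x / v x) ^ 2 * v x ^ 2
        = ((n:ℝ)/2) ^ 2 * (gradSq v x) ^ 2 := by
      field_simp
    nlinarith [mul_le_mul_of_nonneg_right hCS (sq_nonneg (v x)), h3, hn1, hHH,
      sq_nonneg (v x)]
  rw [step1, hSD1cf, hSD2cf]
  have key : ((n:ℝ)/2) * (-(n:ℝ) * v x ^ (-(n:ℝ) - 1) * gradSq v x * gradSq v x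
        + (v x ^ (-(n:ℝ) - 1) * v x) * (∑ j, pd j (gradSq v) x * pd j v x)
        + (v x ^ (-(n:ℝ) - 1) * v x) * gradSq v x * (((n:ℝ)/2) * gradSq v x / v x))
      - (1/2) * (((1:ℝ) - n) * (v x ^ (-(n:ℝ) - 1) * v x) * (∑ j, pd j (gradSq v) x * pd j v x)
        + (v x ^ (-(n:ℝ) - 1) * v x ^ 2)
          * (2 * (∑ i, ∑ j, (pd j (pd i v) x) ^ 2)
            + 2 * (((n:ℝ)/2) * ((∑ i, pd i (gradSq v) x * pd i v x) * (v x)⁻¹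
              - gradSq v x * (v x ^ 2)⁻¹ * gradSq v x))))
      + (((1:ℝ) - n)/2) * (-(n:ℝ) * v x ^ (-(n:ℝ) - 1) * gradSq v x * gradSq v x
        + (v x ^ (-(n:ℝ) - 1) * v x) * (∑ j, pd j (gradSq v) x * pd j v x)
        + (v x ^ (-(n:ℝ) - 1) * v x) * gradSq v x * (((n:ℝ)/2) * gradSq v x / v x))
      = v x ^ (-(n:ℝ) - 1) * (((n:ℝ)/4) * (gradSq v x) ^ 2
          - v x ^ 2 * (∑ i, ∑ j, (pd j (pd i v) x) ^ 2)) := by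
    have hSeq : (∑ i, pd i (gradSq v) x * pd i v x) = ∑ j, pd j (gradSq v) x * pd j v x := rfl
    rw [hSeq]
    generalize (∑ j, pd j (gradSq v) x * pd j v x) = S
    generalize (∑ i, ∑ j, (pd j (pd i v) x) ^ 2) = HH
    generalize v x ^ (-(n:ℝ) - 1) = B
    generalize gradSq v x = Q
    field_simp
    ring
  rw [key]
  nlinarith [hBpos, hq2]
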